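/- Let N ∈ ℕ and let A be an N×N real symmetric matrix with nonnegative entries. Define the step-function graphon h^A:[0,1]^2→ℝ by h^A(x,y) = A_{⌈Nx⌉,⌈Ny⌉} (with the convention ⌈0⌉ = 1). Then the largest eigenvalue of A equals N·‖T_{h^A}‖, where T_{h^A} is the integral operator on L^2([0,1]) with kernel h^A and ‖T_{h^A}‖ its operator norm. -/

import Mathlib

open MeasureTheory Real Filter Set Topology

noncomputable section

/-- The unit interval `[0,1]` as a subset of `ℝ`. -/
def UI : Set ℝ := Set.Icc 0 1

/-- A graphon: a symmetric measurable function `[0,1]² → [0,1]`. -/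
def IsGraphon (h : ℝ → ℝ → ℝ) : Prop :=
  Measurable (Function.uncurry h) ∧ (∀ x y, h x y = h y x) ∧
    ∀ x ∈ UI, ∀ y ∈ UI, h x y ∈ Set.Icc (0:ℝ) 1

/-- The operator norm of the integral operator `T_h` on `L²([0,1])` associated with a
symmetric bounded kernel `h`, expressed via its quadratic form. -/
def gOpNorm (h : ℝ → ℝ → ℝ) : ℝ :=
  sSup {t : ℝ | ∃ u : ℝ → ℝ, Measurable u ∧ IntegrableOn (fun x => u x ^ 2) UI ∧
    (∫ x in UI, u x ^ 2) ≤ 1 ∧ t = |∫ x in UI, ∫ y in UI, u x * h x y * u y|}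

/-- Relative entropy of Bernoulli(a) with respect to Bernoulli(b), with `0 log 0 = 0`. -/
def relEnt (a b : ℝ) : ℝ :=
  a * Real.log (a / b) + (1 - a) * Real.log ((1 - a) / (1 - b))

/-- The rate function `I_r(h) = ∫∫ R(h(x,y) | r(x,y)) dx dy`. -/
def Ient (r h : ℝ → ℝ → ℝ) : ℝ := ∫ x in UI, ∫ y in UI, relEnt (h x y) (r x y)

/-- The rate function `ψ_r(β) = inf { I_r(h) : h graphon, ‖T_h‖ = β }`. -/
def psiRate (r : ℝ → ℝ → ℝ) (β : ℝ) : ℝ :=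
  sInf {c : ℝ | ∃ h : ℝ → ℝ → ℝ, IsGraphon h ∧ gOpNorm h = β ∧ Ient r h = c}

/-- The `L²([0,1]²)` norm of a kernel. -/
def L2norm2 (f : ℝ → ℝ → ℝ) : ℝ := Real.sqrt (∫ x in UI, ∫ y in UI, f x y ^ 2)

end

noncomputable section

/-- The index ⌈Nx⌉ (clamped to {1,…,N}, with the convention ⌈0⌉ = 1), shifted to Fin N. -/
def ceilIdx (N : ℕ) (hN : 0 < N) (x : ℝ) : Fin N :=
  ⟨max 1 (min N (Nat.ceil ((N : ℝ) * x))) - 1, by omega⟩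

/-- Largest eigenvalue of a real matrix. -/
def maxEig {N : ℕ} (M : Matrix (Fin N) (Fin N) ℝ) : ℝ :=
  sSup {t : ℝ | ∃ v : Fin N → ℝ, v ≠ 0 ∧ M.mulVec v = t • v}

end

open MeasureTheory Real Set Matrix in
lemma spectral (N : ℕ) (hN : 0 < N) (A : Matrix (Fin N) (Fin N) ℝ) (hsymm : A.IsSymm) :
    ∃ μ : ℝ,
      (∃ v : Fin N → ℝ, v ≠ 0 ∧ A.mulVec v = μ • v) ∧
      (∀ v : Fin N → ℝ, v ⬝ᵥ A.mulVec v ≤ μ * (v ⬝ᵥ v)) ∧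
      sSup {t : ℝ | ∃ v : Fin N → ℝ, v ≠ 0 ∧ A.mulVec v = t • v} = μ := by
  haveI : Nonempty (Fin N) := ⟨⟨0, hN⟩⟩
  set E := EuclideanSpace ℝ (Fin N)
  haveI : Nontrivial E := by
    refine ⟨0, (WithLp.equiv 2 _).symm (fun _ => 1), ?_⟩
    intro h
    have := congrArg (fun x => (WithLp.equiv 2 (Fin N → ℝ)) x ⟨0, hN⟩) h
    simp only [Equiv.apply_symm_apply] at this
    exact zero_ne_one (α := ℝ) (by simpa using this)
  set T : E →ₗ[ℝ] E := Matrix.toEuclideanLin A with hT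
  have hherm : A.IsHermitian := hsymm
  have hTs : T.IsSymmetric := Matrix.isHermitian_iff_isSymmetric.mp hherm
  set μ : ℝ := ⨆ x : { x : E // x ≠ 0 }, RCLike.re (inner ℝ (T x) (x : E) : ℝ) / ‖(x : E)‖ ^ 2 with hμ
  have hev : Module.End.HasEigenvalue T μ := hTs.hasEigenvalue_iSup_of_finiteDimensional
  -- inner product / mulVec bridge
  have hbridge : ∀ w : Fin N → ℝ,
      (inner ℝ (T ((WithLp.equiv 2 (Fin N → ℝ)).symm w)) ((WithLp.equiv 2 (Fin N → ℝ)).symm w) : ℝ)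
        = (A.mulVec w) ⬝ᵥ w := by
    intro w
    rw [Matrix.toEuclideanLin_apply]
    rw [PiLp.inner_apply]
    simp [RCLike.inner_apply, WithLp.equiv_symm_apply, dotProduct, mul_comm]
  have hnorm : ∀ w : Fin N → ℝ, ‖(WithLp.equiv 2 (Fin N → ℝ)).symm w‖ ^ 2 = w ⬝ᵥ w := by
    intro w
    rw [← real_inner_self_eq_norm_sq]
    rw [PiLp.inner_apply]
    simp [RCLike.inner_apply, WithLp.equiv_symm_apply, dotProduct, pow_two]
  -- boundedness of the Rayleigh quotient
  have hbdd : BddAbove (Set.range fun x : { x : E // x ≠ 0 } =>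
      RCLike.re (inner ℝ (T x) (x : E) : ℝ) / ‖(x : E)‖ ^ 2) := by
    refine ⟨‖LinearMap.toContinuousLinearMap T‖, ?_⟩
    rintro t ⟨⟨x, hx⟩, rfl⟩
    have hx0 : ‖x‖ ≠ 0 := norm_ne_zero_iff.mpr hx
    have hx' : (0:ℝ) < ‖x‖ ^ 2 := by positivity
    rw [div_le_iff₀ hx']
    calc RCLike.re (inner ℝ (T x) x : ℝ) ≤ ‖T x‖ * ‖x‖ := by
          simpa using real_inner_le_norm (T x) x
      _ ≤ (‖LinearMap.toContinuousLinearMap T‖ * ‖x‖) * ‖x‖ := by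
          gcongr; exact (LinearMap.toContinuousLinearMap T).le_opNorm x
      _ = ‖LinearMap.toContinuousLinearMap T‖ * ‖x‖ ^ 2 := by ring
  -- the key quadratic-form bound
  have hquad : ∀ v : Fin N → ℝ, v ⬝ᵥ A.mulVec v ≤ μ * (v ⬝ᵥ v) := by
    intro v
    rcases eq_or_ne v 0 with rfl | hv
    · simp
    · set x : E := (WithLp.equiv 2 (Fin N → ℝ)).symm v with hx
      have hxne : x ≠ 0 := by
        simp only [hx, ne_eq, EmbeddingLike.map_eq_zero_iff]
        intro h; apply hv; simpa using congrArg (WithLp.ofLp (p := 2)) h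
      have h1 : RCLike.re (inner ℝ (T x) (x : E) : ℝ) / ‖x‖ ^ 2 ≤ μ :=
        le_ciSup hbdd (⟨x, hxne⟩ : { x : E // x ≠ 0 })
      have hpos : (0:ℝ) < ‖x‖ ^ 2 := by
        have : ‖x‖ ≠ 0 := norm_ne_zero_iff.mpr hxne
        positivity
      rw [div_le_iff₀ hpos] at h1
      have h2 : RCLike.re (inner ℝ (T x) (x : E) : ℝ) = (A.mulVec v) ⬝ᵥ v := by
        simpa [hx] using hbridge v
      rw [h2, hnorm v] at h1
      calc v ⬝ᵥ A.mulVec v = (A.mulVec v) ⬝ᵥ v := by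
            rw [dotProduct_comm]
        _ ≤ μ * (v ⬝ᵥ v) := h1
  -- eigenvector for μ
  obtain ⟨x, hx⟩ := hev.exists_hasEigenvector
  have hxne : x ≠ 0 := hx.right
  have hxeq : T x = μ • x := hx.apply_eq_smul
  refine ⟨μ, ⟨WithLp.equiv 2 (Fin N → ℝ) x, ?_, ?_⟩, hquad, ?_⟩
  · simpa using hxne
  · have := congrArg (WithLp.equiv 2 (Fin N → ℝ)) hxeq
    rw [Matrix.toEuclideanLin_apply] at this
    exact this
  · -- sSup of the eigenvalue set is μ
    apply IsGreatest.csSup_eq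
    constructor
    · exact ⟨WithLp.equiv 2 (Fin N → ℝ) x, by simpa using hxne, by
        have := congrArg (WithLp.equiv 2 (Fin N → ℝ)) hxeq
        rw [Matrix.toEuclideanLin_apply] at this
        exact this⟩
    · rintro t ⟨v, hv, hveq⟩
      have h1 : v ⬝ᵥ A.mulVec v ≤ μ * (v ⬝ᵥ v) := hquad v
      have h2 : v ⬝ᵥ A.mulVec v = t * (v ⬝ᵥ v) := by
        rw [hveq]; simp [dotProduct_smul, smul_eq_mul]
      have hvpos : (0:ℝ) < v ⬝ᵥ v := by
        obtain ⟨i, hi⟩ := Function.ne_iff.mp hv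
        rw [dotProduct]
        exact Finset.sum_pos' (fun j _ => mul_self_nonneg (v j))
          ⟨i, Finset.mem_univ i, mul_self_pos.mpr hi⟩
      nlinarith [h2, h1, hvpos]

section Aux
variable {N : ℕ}

/-- The `i`-th dyadic piece `(i/N, (i+1)/N]`. -/
def JJ (N : ℕ) (i : Fin N) : Set ℝ := Set.Ioc ((i : ℝ) / N) (((i : ℝ) + 1) / N)

lemma JJ_subset (i : Fin N) : JJ N i ⊆ UI := by
  have hN : 0 < N := i.pos
  intro x hx
  obtain ⟨h1, h2⟩ := hx
  have hN' : (0:ℝ) < N := by positivity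
  constructor
  · have : (0:ℝ) ≤ (i : ℝ) / N := by positivity
    linarith
  · have hiN : (i : ℝ) + 1 ≤ N := by
      have := i.is_lt
      exact_mod_cast this
    calc x ≤ ((i : ℝ) + 1) / N := h2
      _ ≤ (N : ℝ) / N := by gcongr
      _ = 1 := by field_simp

lemma ceilIdx_eq (hN : 0 < N) (i : Fin N) {x : ℝ} (hx : x ∈ JJ N i) : ceilIdx N hN x = i := by
  obtain ⟨h1, h2⟩ := hx
  have hN' : (0:ℝ) < N := by positivity
  have hlo : (i : ℝ) < N * x := by
    rw [div_lt_iff₀ hN', mul_comm] at h1; exact h1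
  have hhi : (N : ℝ) * x ≤ (i : ℝ) + 1 := by
    rw [le_div_iff₀ hN', mul_comm] at h2; exact h2
  have hceil : ⌈(N : ℝ) * x⌉₊ = (i : ℕ) + 1 := by
    rw [Nat.ceil_eq_iff (by omega)]
    constructor
    · simpa using hlo
    · push_cast; exact hhi
  have hi : (i : ℕ) + 1 ≤ N := i.is_lt
  apply Fin.ext
  simp only [ceilIdx, hceil]
  omega

lemma measurable_ceilIdx (hN : 0 < N) : Measurable (ceilIdx N hN) := by
  have : ceilIdx N hN = (fun n : ℕ => (⟨max 1 (min N n) - 1, by omega⟩ : Fin N)) ∘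
      (fun x : ℝ => ⌈(N : ℝ) * x⌉₊) := rfl
  rw [this]
  exact measurable_from_top.comp (Nat.measurable_ceil.comp (measurable_const_mul _))

lemma iUnion_JJ (hN : 0 < N) : (⋃ i : Fin N, JJ N i) = Set.Ioc (0:ℝ) 1 := by
  have hN' : (0:ℝ) < N := Nat.cast_pos.mpr hN
  ext x
  simp only [Set.mem_iUnion, JJ, Set.mem_Ioc]
  constructor
  · rintro ⟨i, h1, h2⟩
    have h0 : (0:ℝ) ≤ (i : ℝ) / N := by positivity
    have hiN : (i : ℝ) + 1 ≤ N := by exact_mod_cast i.is_lt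
    refine ⟨lt_of_le_of_lt h0 h1, h2.trans ?_⟩
    calc ((i : ℝ) + 1) / N ≤ (N : ℝ) / N := by gcongr
      _ = 1 := by field_simp
  · rintro ⟨h1, h2⟩
    have hx0 : (0:ℝ) < N * x := by positivity
    have hk1 : 1 ≤ ⌈(N : ℝ) * x⌉₊ := Nat.one_le_ceil_iff.mpr hx0
    have hkN : ⌈(N : ℝ) * x⌉₊ ≤ N := by
      apply Nat.ceil_le.mpr
      calc (N : ℝ) * x ≤ N * 1 := by gcongr
        _ = N := by ring
    refine ⟨⟨⌈(N : ℝ) * x⌉₊ - 1, by omega⟩, ?_, ?_⟩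
    · rw [div_lt_iff₀ hN']
      have : (↑(⌈(N : ℝ) * x⌉₊ - 1) : ℝ) < N * x := by
        have := Nat.lt_ceil.mp (by omega : ⌈(N : ℝ) * x⌉₊ - 1 < ⌈(N : ℝ) * x⌉₊)
        exact this
      calc (↑(⌈(N : ℝ) * x⌉₊ - 1) : ℝ) < N * x := this
        _ = x * N := by ring
    · rw [le_div_iff₀ hN']
      have h3 : (N : ℝ) * x ≤ ⌈(N : ℝ) * x⌉₊ := Nat.le_ceil _
      have h4 : (↑(⌈(N : ℝ) * x⌉₊ - 1) : ℝ) + 1 = ⌈(N : ℝ) * x⌉₊ := by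
        push_cast [Nat.cast_sub hk1]; ring
      rw [h4]
      linarith [h3]

lemma disjoint_JJ (hN : 0 < N) : Pairwise (Function.onFun Disjoint (JJ N)) := by
  intro i j hij
  have hN' : (0:ℝ) < N := Nat.cast_pos.mpr hN
  simp only [Function.onFun, JJ]
  rw [Set.Ioc_disjoint_Ioc]
  rcases lt_or_gt_of_ne (Fin.val_ne_of_ne hij) with h | h
  · have : (i : ℝ) + 1 ≤ (j : ℝ) := by exact_mod_cast h
    calc min (((i:ℝ)+1)/N) (((j:ℝ)+1)/N) ≤ ((i:ℝ)+1)/N := min_le_left _ _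
      _ ≤ (j:ℝ)/N := by gcongr
      _ ≤ max ((i:ℝ)/N) ((j:ℝ)/N) := le_max_right _ _
  · have : (j : ℝ) + 1 ≤ (i : ℝ) := by exact_mod_cast h
    calc min (((i:ℝ)+1)/N) (((j:ℝ)+1)/N) ≤ ((j:ℝ)+1)/N := min_le_right _ _
      _ ≤ (i:ℝ)/N := by gcongr
      _ ≤ max ((i:ℝ)/N) ((j:ℝ)/N) := le_max_left _ _

/-- Splitting an integral over `[0,1]` into the pieces. -/
lemma sum_JJ (hN : 0 < N) {f : ℝ → ℝ} (hf : IntegrableOn f UI) :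
    ∫ x in UI, f x = ∑ i : Fin N, ∫ x in JJ N i, f x := by
  have h1 : ∫ x in UI, f x = ∫ x in Set.Ioc (0:ℝ) 1, f x :=
    integral_Icc_eq_integral_Ioc
  have hint : IntegrableOn f (⋃ i : Fin N, JJ N i) :=
    hf.mono_set (by rw [iUnion_JJ hN]; exact Set.Ioc_subset_Icc_self)
  have h2 := integral_iUnion (μ := volume) (s := JJ N) (f := f)
    (fun i => measurableSet_Ioc) (disjoint_JJ hN) hint
  rw [h1, ← iUnion_JJ hN, h2, tsum_fintype]

lemma volume_JJ (i : Fin N) : (volume (JJ N i)).toReal = 1 / N := by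
  have hN : 0 < N := i.pos
  have hN' : (0:ℝ) < N := by positivity
  have heq : ((i:ℝ)+1)/N - (i:ℝ)/N = 1/N := by ring
  rw [JJ, Real.volume_Ioc, heq, ENNReal.toReal_ofReal (by positivity)]

end Aux
section Aux2
open MeasureTheory Real Set Matrix
variable {N : ℕ}

lemma integrableOn_step_mul (hN : 0 < N) (g : Fin N → ℝ) {u : ℝ → ℝ}
    (hu : IntegrableOn u UI) :
    IntegrableOn (fun x => g (ceilIdx N hN x) * u x) UI := by
  have hC : ∀ j : Fin N, |g j| ≤ ∑ i : Fin N, |g i| := fun j =>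
    Finset.single_le_sum (f := fun i => |g i|) (fun i _ => abs_nonneg _) (Finset.mem_univ j)
  refine Integrable.mono' ((hu.norm.const_mul (∑ i : Fin N, |g i|)))
    ?_ (Filter.Eventually.of_forall fun x => ?_)
  · exact (((measurable_from_top).comp (measurable_ceilIdx hN)).aestronglyMeasurable.mul
      hu.aestronglyMeasurable : AEStronglyMeasurable (fun x => g (ceilIdx N hN x) * u x) _)
  · rw [norm_mul]
    exact mul_le_mul_of_nonneg_right (by simpa [Real.norm_eq_abs] using hC (ceilIdx N hN x))
      (norm_nonneg _)

/-- The fundamental step-function integral identity. -/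
lemma stepInt (hN : 0 < N) (g : Fin N → ℝ) {u : ℝ → ℝ} (hu : IntegrableOn u UI) :
    ∫ x in UI, g (ceilIdx N hN x) * u x
      = ∑ i : Fin N, g i * ∫ x in JJ N i, u x := by
  rw [sum_JJ hN (integrableOn_step_mul hN g hu)]
  refine Finset.sum_congr rfl fun i _ => ?_
  rw [← MeasureTheory.integral_const_mul]
  refine setIntegral_congr_fun measurableSet_Ioc fun x hx => ?_
  rw [ceilIdx_eq hN i hx]

/-- step functions: integral of `g ∘ ceilIdx` itself. -/
lemma stepInt_const (hN : 0 < N) (g : Fin N → ℝ) :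
    ∫ x in UI, g (ceilIdx N hN x) = (∑ i : Fin N, g i) / N := by
  have h1 : IntegrableOn (fun _ : ℝ => (1:ℝ)) UI := by
    exact integrableOn_const (by rw [UI, Real.volume_Icc]; simp)
  have := stepInt hN g h1
  simp only [mul_one] at this
  rw [this]
  rw [Finset.sum_div]
  refine Finset.sum_congr rfl fun i _ => ?_
  rw [setIntegral_const, smul_eq_mul, measureReal_def, volume_JJ i]
  ring

end Aux2
section Aux3
open MeasureTheory Real Set Matrix
variable {N : ℕ}

lemma integrableOn_of_sq {u : ℝ → ℝ} (hm : Measurable u)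
    (hu2 : IntegrableOn (fun x => u x ^ 2) UI) : IntegrableOn u UI := by
  have hconst : IntegrableOn (fun _ : ℝ => (1:ℝ)) UI := by
    exact integrableOn_const (by rw [UI, Real.volume_Icc]; simp)
  refine Integrable.mono' (hconst.add hu2) hm.aestronglyMeasurable
    (Filter.Eventually.of_forall fun x => ?_)
  simp only [Pi.add_apply, Real.norm_eq_abs]
  nlinarith [abs_nonneg (u x), sq_abs (u x), sq_nonneg (|u x| - 1)]

/-- Cauchy–Schwarz on each piece, summed. -/
lemma sum_sq_piece_le (hN : 0 < N) {u : ℝ → ℝ} (hm : Measurable u)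
    (hu2 : IntegrableOn (fun x => u x ^ 2) UI) :
    ∑ i : Fin N, (∫ x in JJ N i, u x) ^ 2 ≤ (∫ x in UI, u x ^ 2) / N := by
  have hN' : (0:ℝ) < N := Nat.cast_pos.mpr hN
  have hu1 : IntegrableOn u UI := integrableOn_of_sq hm hu2
  have key : ∀ i : Fin N, (∫ x in JJ N i, u x) ^ 2 ≤ (∫ x in JJ N i, u x ^ 2) / N := by
    intro i
    set a : ℝ := ∫ x in JJ N i, u x with ha
    have hJsub : JJ N i ⊆ UI := JJ_subset i
    have hu1' : IntegrableOn u (JJ N i) := hu1.mono_set hJsub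
    have hu2' : IntegrableOn (fun x => u x ^ 2) (JJ N i) := hu2.mono_set hJsub
    have hμ : (volume (JJ N i)).toReal = 1 / N := volume_JJ i
    have hconst : IntegrableOn (fun _ : ℝ => ((N:ℝ) * a) ^ 2) (JJ N i) := by
      exact integrableOn_const (by rw [JJ, Real.volume_Ioc]; exact ENNReal.ofReal_ne_top)
    have h0 : 0 ≤ ∫ x in JJ N i, (u x - N * a) ^ 2 :=
      integral_nonneg fun x => sq_nonneg _
    have hexp : ∀ x : ℝ, (u x - N * a) ^ 2
        = u x ^ 2 - (2 * ((N:ℝ) * a)) * u x + ((N:ℝ) * a) ^ 2 := by intro x; ring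
    rw [integral_congr_ae (Filter.Eventually.of_forall hexp)] at h0
    have hsubint : Integrable (fun x => u x ^ 2 - (2 * ((N:ℝ) * a)) * u x)
        (volume.restrict (JJ N i)) := hu2'.sub (hu1'.const_mul _)
    have h1 : (∫ x in JJ N i, (u x ^ 2 - (2 * ((N:ℝ) * a)) * u x + ((N:ℝ) * a) ^ 2))
        = (∫ x in JJ N i, u x ^ 2) - 2 * ((N:ℝ) * a) * a + ((N:ℝ) * a) ^ 2 * (1/N) := by
      rw [integral_add hsubint hconst, integral_sub hu2' (hu1'.const_mul _),
        MeasureTheory.integral_const_mul, setIntegral_const, smul_eq_mul, measureReal_def, hμ, ← ha]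
      ring
    rw [h1] at h0
    rw [le_div_iff₀ hN']
    have hexpand : ((N:ℝ) * a) ^ 2 * (1/N) = N * a ^ 2 := by field_simp
    nlinarith [h0, hexpand]
  calc ∑ i : Fin N, (∫ x in JJ N i, u x) ^ 2
      ≤ ∑ i : Fin N, (∫ x in JJ N i, u x ^ 2) / N := Finset.sum_le_sum fun i _ => key i
    _ = (∑ i : Fin N, ∫ x in JJ N i, u x ^ 2) / N := by rw [Finset.sum_div]
    _ = (∫ x in UI, u x ^ 2) / N := by rw [← sum_JJ hN hu2]

end Aux3
section Aux4
open MeasureTheory Real Set Matrix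
variable {N : ℕ}

lemma doubleInt (hN : 0 < N) (A : Matrix (Fin N) (Fin N) ℝ) {u : ℝ → ℝ}
    (hu1 : IntegrableOn u UI) :
    ∫ x in UI, ∫ y in UI, u x * A (ceilIdx N hN x) (ceilIdx N hN y) * u y
      = ∑ i : Fin N, ∑ j : Fin N,
          A i j * (∫ x in JJ N i, u x) * (∫ x in JJ N j, u x) := by
  set a : Fin N → ℝ := fun i => ∫ x in JJ N i, u x with ha
  have hinner : ∀ x : ℝ, (∫ y in UI, u x * A (ceilIdx N hN x) (ceilIdx N hN y) * u y)
      = ∑ j : Fin N, (A (ceilIdx N hN x) j * a j) * u x := by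
    intro x
    calc (∫ y in UI, u x * A (ceilIdx N hN x) (ceilIdx N hN y) * u y)
        = ∑ j : Fin N, (u x * A (ceilIdx N hN x) j) * a j :=
          stepInt hN (fun j => u x * A (ceilIdx N hN x) j) hu1
      _ = ∑ j : Fin N, (A (ceilIdx N hN x) j * a j) * u x :=
          Finset.sum_congr rfl fun j _ => by ring
  rw [integral_congr_ae (Filter.Eventually.of_forall hinner)]
  rw [integral_finset_sum _
    (fun j _ => integrableOn_step_mul hN (fun i => A i j * a j) hu1)]
  have hcol : ∀ j : Fin N, (∫ x in UI, (A (ceilIdx N hN x) j * a j) * u x)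
      = ∑ i : Fin N, (A i j * a j) * a i := fun j => stepInt hN (fun i => A i j * a j) hu1
  rw [Finset.sum_congr rfl fun j _ => hcol j, Finset.sum_comm]
  exact Finset.sum_congr rfl fun i _ => Finset.sum_congr rfl fun j _ => by ring

end Aux4


open MeasureTheory Real Set Matrix in
/-- the largest eigenvalue of a symmetric nonnegative N×N matrix A equals
N·‖T_{h^A}‖, where h^A(x,y) = A_{⌈Nx⌉,⌈Ny⌉}. -/
theorem maxEig_eq_opNorm_step_kernel
    (N : ℕ) (hN : 0 < N) (A : Matrix (Fin N) (Fin N) ℝ)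
    (hsymm : A.IsSymm) (hnonneg : ∀ i j, 0 ≤ A i j) :
    maxEig A = N * gOpNorm (fun x y => A (ceilIdx N hN x) (ceilIdx N hN y)) := by
  classical
  obtain ⟨μ, ⟨v, hv0, hveig⟩, hquad, hmax⟩ := spectral N hN A hsymm
  have hN' : (0:ℝ) < N := Nat.cast_pos.mpr hN
  have hdot : ∀ w : Fin N → ℝ, w ⬝ᵥ A.mulVec w = ∑ i, ∑ j, A i j * w i * w j := by
    intro w
    simp only [dotProduct, Matrix.mulVec, Finset.mul_sum]
    exact Finset.sum_congr rfl fun i _ => Finset.sum_congr rfl fun j _ => by ring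
  have hμ0 : 0 ≤ μ := by
    have h := hquad (Pi.single ⟨0, hN⟩ 1)
    rw [show (Pi.single (⟨0,hN⟩ : Fin N) (1:ℝ)) ⬝ᵥ A.mulVec (Pi.single ⟨0,hN⟩ 1)
          = A ⟨0,hN⟩ ⟨0,hN⟩ by simp [Matrix.mulVec_single, single_dotProduct],
      show (Pi.single (⟨0,hN⟩ : Fin N) (1:ℝ)) ⬝ᵥ (Pi.single ⟨0,hN⟩ 1) = 1 by
        simp [single_dotProduct]] at h
    have := hnonneg ⟨0,hN⟩ ⟨0,hN⟩
    linarith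
  set q : ℝ := v ⬝ᵥ v with hqdef
  have hq : 0 < q := by
    obtain ⟨i, hi⟩ := Function.ne_iff.mp hv0
    rw [hqdef, dotProduct]
    exact Finset.sum_pos' (fun j _ => mul_self_nonneg (v j))
      ⟨i, Finset.mem_univ i, mul_self_pos.mpr hi⟩
  have hvAv : v ⬝ᵥ A.mulVec v = μ * q := by
    rw [hveig, hqdef]
    simp [dotProduct_smul, smul_eq_mul]
  set K : ℝ := Real.sqrt N / Real.sqrt q with hK
  have hK2 : K ^ 2 = N / q := by
    rw [hK, div_pow, Real.sq_sqrt hN'.le, Real.sq_sqrt hq.le]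
  set u₀ : ℝ → ℝ := fun x => K * v (ceilIdx N hN x) with hu₀
  have hmeas₀ : Measurable u₀ :=
    (measurable_from_top.comp (measurable_ceilIdx hN) : Measurable
      fun x => v (ceilIdx N hN x)).const_mul K
  have hconst1 : IntegrableOn (fun _ : ℝ => (1:ℝ)) UI := by
    exact integrableOn_const (by rw [UI, Real.volume_Icc]; simp)
  have hint2₀ : IntegrableOn (fun x => u₀ x ^ 2) UI := by
    have h1 := integrableOn_step_mul hN (fun i => (K * v i) ^ 2) hconst1
    exact h1.congr (Filter.EventuallyEq.of_eq (funext fun x => by simp only [hu₀]; ring))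
  have hval2₀ : (∫ x in UI, u₀ x ^ 2) = 1 := by
    have h1 : (∫ x in UI, u₀ x ^ 2) = (∑ i : Fin N, (K * v i) ^ 2) / N :=
      stepInt_const hN (fun i => (K * v i) ^ 2)
    have h2 : ∑ i : Fin N, (K * v i) ^ 2 = K ^ 2 * q := by
      rw [hqdef, dotProduct, Finset.mul_sum]
      exact Finset.sum_congr rfl fun i _ => by ring
    rw [h1, h2, hK2]
    field_simp
  have ha₀ : ∀ i : Fin N, (∫ x in JJ N i, u₀ x) = K * v i * (1/N) := by
    intro i
    rw [show (∫ x in JJ N i, u₀ x) = ∫ x in JJ N i, K * v i from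
      setIntegral_congr_fun measurableSet_Ioc (fun x hx => by
        simp only [hu₀]; rw [ceilIdx_eq hN i hx])]
    rw [setIntegral_const, smul_eq_mul, measureReal_def, volume_JJ i]
    ring
  have hdouble₀ : (∫ x in UI, ∫ y in UI,
      u₀ x * A (ceilIdx N hN x) (ceilIdx N hN y) * u₀ y) = μ / N := by
    rw [doubleInt hN A (integrableOn_of_sq hmeas₀ hint2₀)]
    have h3 : ∀ i j : Fin N, A i j * (∫ x in JJ N i, u₀ x) * (∫ x in JJ N j, u₀ x)
        = (K ^ 2 / N ^ 2) * (A i j * v i * v j) := by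
      intro i j; rw [ha₀ i, ha₀ j]; ring
    rw [Finset.sum_congr rfl fun i _ => Finset.sum_congr rfl fun j _ => h3 i j]
    simp only [← Finset.mul_sum]
    rw [← hdot, hvAv, hK2]
    field_simp
  have hmem : μ / N ∈ {t : ℝ | ∃ u : ℝ → ℝ, Measurable u ∧
      IntegrableOn (fun x => u x ^ 2) UI ∧ (∫ x in UI, u x ^ 2) ≤ 1 ∧
      t = |∫ x in UI, ∫ y in UI, u x * A (ceilIdx N hN x) (ceilIdx N hN y) * u y|} :=
    ⟨u₀, hmeas₀, hint2₀, le_of_eq hval2₀, by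
      rw [hdouble₀, abs_of_nonneg (div_nonneg hμ0 hN'.le)]⟩
  have hub : ∀ t ∈ {t : ℝ | ∃ u : ℝ → ℝ, Measurable u ∧
      IntegrableOn (fun x => u x ^ 2) UI ∧ (∫ x in UI, u x ^ 2) ≤ 1 ∧
      t = |∫ x in UI, ∫ y in UI, u x * A (ceilIdx N hN x) (ceilIdx N hN y) * u y|},
      t ≤ μ / N := by
    rintro t ⟨u, hm, hu2i, hu2le, rfl⟩
    have hu1 := integrableOn_of_sq hm hu2i
    rw [doubleInt hN A hu1]
    set a : Fin N → ℝ := fun i => ∫ x in JJ N i, u x with hadef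
    calc |∑ i : Fin N, ∑ j : Fin N, A i j * a i * a j|
        ≤ ∑ i : Fin N, ∑ j : Fin N, |A i j * a i * a j| :=
          le_trans (Finset.abs_sum_le_sum_abs _ _)
            (Finset.sum_le_sum fun i _ => Finset.abs_sum_le_sum_abs _ _)
      _ = ∑ i : Fin N, ∑ j : Fin N, A i j * |a i| * |a j| := by
          refine Finset.sum_congr rfl fun i _ => Finset.sum_congr rfl fun j _ => ?_
          rw [abs_mul, abs_mul, abs_of_nonneg (hnonneg i j)]
      _ = (fun i => |a i|) ⬝ᵥ A.mulVec (fun i => |a i|) := (hdot _).symm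
      _ ≤ μ * ((fun i => |a i|) ⬝ᵥ (fun i => |a i|)) := hquad _
      _ = μ * ∑ i : Fin N, a i ^ 2 := by
          rw [dotProduct]
          congr 1
          exact Finset.sum_congr rfl fun i _ => by rw [abs_mul_abs_self]; ring
      _ ≤ μ * ((∫ x in UI, u x ^ 2) / N) :=
          mul_le_mul_of_nonneg_left (sum_sq_piece_le hN hm hu2i) hμ0
      _ ≤ μ * (1 / N) :=
          mul_le_mul_of_nonneg_left (by gcongr) hμ0
      _ = μ / N := by ring
  have key : sSup {t : ℝ | ∃ u : ℝ → ℝ, Measurable u ∧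
      IntegrableOn (fun x => u x ^ 2) UI ∧ (∫ x in UI, u x ^ 2) ≤ 1 ∧
      t = |∫ x in UI, ∫ y in UI, u x * A (ceilIdx N hN x) (ceilIdx N hN y) * u y|}
        = μ / N :=
    IsGreatest.csSup_eq ⟨hmem, hub⟩
  rw [show maxEig A = μ from hmax,
    show gOpNorm (fun x y => A (ceilIdx N hN x) (ceilIdx N hN y)) = μ / N from key]
  field_simp
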